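/- Let J ≥ 1, let c_1,…,c_J > 0, λ > 0, γ > 0, and let b_1,…,b_J be distinct reals. Define h₀ : ℝ → ℝ by h₀(b_j) = −λ c_j for j = 1,…,J and h₀(x) = 0 for x ∉ {b_1,…,b_J}. If v ∈ ℝ satisfies v ∉ {b_1,…,b_J} and (v − b_j)² > 2γλ c_j for every j ∈ {1,…,J}, then x = v is the unique global minimizer over ℝ of the function φ(x) = h₀(x) + (1/(2γ))(x − v)². -/

import Mathlib

/-- Proximal operator of the weighted ℓ₀-sum, case of no shrinkage: if
`v ∉ {b₁,…,b_J}` and `(v − bⱼ)² > 2γλcⱼ` for all `j`, then `x = v` is the unique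
global minimizer of `φ(x) = h₀(x) + (1/(2γ))(x − v)²`, where `h₀(bⱼ) = −λcⱼ` and
`h₀ = 0` off the breakpoints. -/
theorem stmt13 (J : ℕ) (hJ : 0 < J) (c b : Fin J → ℝ) (hc : ∀ j, 0 < c j)
    (lam γ : ℝ) (hlam : 0 < lam) (hγ : 0 < γ) (hb : Function.Injective b)
    (h₀ : ℝ → ℝ) (hh₀ : ∀ x, h₀ x = ∑ j, if x = b j then -lam * c j else 0)
    (v : ℝ) (hv : v ∉ Set.range b)
    (hthr : ∀ j, 2 * γ * lam * c j < (v - b j) ^ 2) :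
    ∀ x : ℝ, x ≠ v →
      h₀ v + 1 / (2 * γ) * (v - v) ^ 2 < h₀ x + 1 / (2 * γ) * (x - v) ^ 2 := by
  intro x hx
  have hv0 : h₀ v = 0 := by
    rw [hh₀]
    apply Finset.sum_eq_zero
    intro j _
    rw [if_neg]
    exact fun h => hv ⟨j, h.symm⟩
  have hL : h₀ v + 1 / (2 * γ) * (v - v) ^ 2 = 0 := by rw [hv0]; ring
  rw [hL]
  by_cases hxr : x ∈ Set.range b
  · obtain ⟨j, rfl⟩ := hxr
    have hx0 : h₀ (b j) = -lam * c j := by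
      rw [hh₀]
      rw [Finset.sum_eq_single j]
      · simp
      · intro k _ hk
        rw [if_neg (fun h => hk (hb h.symm))]
      · simp
    rw [hx0]
    have h1 := hthr j
    have h2 : (b j - v) ^ 2 = (v - b j) ^ 2 := by ring
    rw [h2]
    have hγ' : 0 < 1 / (2 * γ) := by positivity
    have key : 1 / (2 * γ) * (2 * γ * lam * c j) < 1 / (2 * γ) * (v - b j) ^ 2 :=
      mul_lt_mul_of_pos_left h1 hγ'
    have heq : 1 / (2 * γ) * (2 * γ * lam * c j) = lam * c j := by
      field_simp
    rw [heq] at key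
    linarith
  · have hx0 : h₀ x = 0 := by
      rw [hh₀]
      apply Finset.sum_eq_zero
      intro j _
      rw [if_neg (fun h => hxr ⟨j, h.symm⟩)]
    rw [hx0, zero_add]
    have hxv : x - v ≠ 0 := sub_ne_zero.mpr hx
    positivity
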